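/- Let V : [0,∞) → [0,∞) and ζ : [0,∞) → [0,∞) be continuously differentiable functions, let ψ : [0,∞) → [ψ̲, ψ̄] be a function whose values lie in an interval [ψ̲, ψ̄] with ψ̲·ψ̄ > 0, let ι be a real constant, and let ħ be a B-type Nussbaum function. If for all t ≥ 0 one has V′(t) ≤ (ψ(t)·ħ(ζ(t)) + ι)·ζ′(t) and ζ′(t) ≥ 0, then both V and ζ are bounded on [0,∞). -/

import Mathlib

open Filter

/-- The positive part `ħ⁺(ζ) = max {0, ħ(ζ)}`. -/
noncomputable def nussPos (h : ℝ → ℝ) (ζ : ℝ) : ℝ := max 0 (h ζ)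

/-- The negative part `ħ⁻(ζ) = max {0, −ħ(ζ)}`. -/
noncomputable def nussNeg (h : ℝ → ℝ) (ζ : ℝ) : ℝ := max 0 (-h ζ)

/-- A continuously differentiable function `ħ : [0,∞) → ℝ` is a *B-type Nussbaum
function* if `lim_{ζ→∞} (1/ζ)∫₀^ζ ħ⁺ = ∞`, `lim_{ζ→∞} (1/ζ)∫₀^ζ ħ⁻ = ∞`,
`limsup_{ζ→∞} (∫₀^ζ ħ⁺)/(∫₀^ζ ħ⁻) = ∞` and `limsup_{ζ→∞} (∫₀^ζ ħ⁻)/(∫₀^ζ ħ⁺) = ∞`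
(the limsups are taken in the extended reals so that `= ∞` is meaningful). -/
def IsBNussbaum (h : ℝ → ℝ) : Prop :=
  ContDiff ℝ 1 h ∧
  Tendsto (fun ζ => (∫ τ in (0:ℝ)..ζ, nussPos h τ) / ζ) atTop atTop ∧
  Tendsto (fun ζ => (∫ τ in (0:ℝ)..ζ, nussNeg h τ) / ζ) atTop atTop ∧
  limsup (fun ζ =>
      (((∫ τ in (0:ℝ)..ζ, nussPos h τ) / (∫ τ in (0:ℝ)..ζ, nussNeg h τ) : ℝ) : EReal)) atTop = ⊤ ∧
  limsup (fun ζ =>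
      (((∫ τ in (0:ℝ)..ζ, nussNeg h τ) / (∫ τ in (0:ℝ)..ζ, nussPos h τ) : ℝ) : EReal)) atTop = ⊤

lemma keyContr (H1 H2 : ℝ → ℝ) (a b c d : ℝ) (ha : 0 < a)
    (h2 : Tendsto (fun z => H2 z / z) atTop atTop)
    (hls : limsup (fun z => ((H1 z / H2 z : ℝ) : EReal)) atTop = ⊤)
    (hP : ∀ᶠ z in atTop, a * H1 z ≤ b * H2 z + c * z + d) : False := by
  set M : ℝ := (|b| + 1) / a with hMdef
  have hfr : ∃ᶠ z in atTop, (M : EReal) < ((H1 z / H2 z : ℝ) : EReal) := by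
    apply frequently_lt_of_lt_limsup
    · exact Filter.isCobounded_le_of_bot
    · rw [hls]; exact EReal.coe_lt_top M
  have hev : ∀ᶠ z in atTop, a * H1 z ≤ b * H2 z + c * z + d ∧
      1 ≤ z ∧ |c| + |d| + 1 ≤ H2 z / z :=
    hP.and ((eventually_ge_atTop 1).and (h2.eventually_ge_atTop (|c| + |d| + 1)))
  obtain ⟨z, hM, hPz, hz1, hH2z⟩ := (hfr.and_eventually hev).exists
  have hz0 : (0:ℝ) < z := lt_of_lt_of_le one_pos hz1
  have hH2pos : 0 < H2 z := by
    have : (|c| + |d| + 1) * z ≤ H2 z := by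
      rw [le_div_iff₀ hz0] at hH2z
      linarith [hH2z]
    nlinarith [abs_nonneg c, abs_nonneg d]
  have hMlt : M < H1 z / H2 z := by exact_mod_cast hM
  have h1 : M * H2 z < H1 z := by
    rw [lt_div_iff₀ hH2pos] at hMlt; linarith
  have haM : a * M = |b| + 1 := by
    rw [hMdef]; field_simp [ha.ne']
  have hcz : c * z + d ≤ H2 z := by
    have h3 : (|c| + |d| + 1) * z ≤ H2 z := by
      rw [le_div_iff₀ hz0] at hH2z; linarith
    nlinarith [le_abs_self c, le_abs_self d, abs_nonneg d]
  have hb' : b * H2 z ≤ |b| * H2 z :=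
    mul_le_mul_of_nonneg_right (le_abs_self b) hH2pos.le
  nlinarith [mul_lt_mul_of_pos_left h1 ha]


/-- Lemma 1 of the paper for `L = ∞`, after Chen 2019.
Let `V, ζ : [0,∞) → [0,∞)` be continuously differentiable, let
`ψ : [0,∞) → [ψ̲, ψ̄]` with `ψ̲·ψ̄ > 0`, let `ι ∈ ℝ`, and let `ħ` be a B-type
Nussbaum function.  If `V′(t) ≤ (ψ(t)·ħ(ζ(t)) + ι)·ζ′(t)` and `ζ′(t) ≥ 0` for all
`t ≥ 0`, then `V` and `ζ` are bounded on `[0,∞)`. -/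
theorem b_nussbaum_lemma
    (V ζ ψ h : ℝ → ℝ) (ψlo ψhi ι : ℝ)
    (hV_smooth : ContDiff ℝ 1 V) (hζ_smooth : ContDiff ℝ 1 ζ)
    (hV_nonneg : ∀ t, 0 ≤ t → 0 ≤ V t)
    (hζ_nonneg : ∀ t, 0 ≤ t → 0 ≤ ζ t)
    (hψ : ∀ t, 0 ≤ t → ψ t ∈ Set.Icc ψlo ψhi)
    (hψprod : 0 < ψlo * ψhi)
    (hNuss : IsBNussbaum h)
    (hineq : ∀ t, 0 ≤ t → deriv V t ≤ (ψ t * h (ζ t) + ι) * deriv ζ t)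
    (hζ_mono : ∀ t, 0 ≤ t → 0 ≤ deriv ζ t) :
    (∃ C : ℝ, ∀ t, 0 ≤ t → V t ≤ C) ∧ (∃ C : ℝ, ∀ t, 0 ≤ t → ζ t ≤ C) := by
  obtain ⟨hh_smooth, hTp, hTm, hlsP, hlsM⟩ := hNuss
  have hψ0 := hψ 0 le_rfl
  have hcase : 0 < ψlo ∨ ψhi < 0 := by
    rcases lt_or_ge 0 ψlo with h' | h'
    · exact Or.inl h'
    · right; by_contra hc; push_neg at hc; nlinarith [hψ0.1, hψ0.2]
  have hgp : Continuous (nussPos h) := continuous_const.max hh_smooth.continuous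
  have hgm : Continuous (nussNeg h) := continuous_const.max hh_smooth.continuous.neg
  set Hp : ℝ → ℝ := fun x => ∫ τ in (0:ℝ)..x, nussPos h τ with hHp
  set Hm : ℝ → ℝ := fun x => ∫ τ in (0:ℝ)..x, nussNeg h τ with hHm
  have hHpD : ∀ x, HasDerivAt Hp (nussPos h x) x := fun x =>
    (hgp.integral_hasStrictDerivAt 0 x).hasDerivAt
  have hHmD : ∀ x, HasDerivAt Hm (nussNeg h x) x := fun x =>
    (hgm.integral_hasStrictDerivAt 0 x).hasDerivAt
  have hVD : ∀ t, HasDerivAt V (deriv V t) t := fun t =>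
    ((hV_smooth.differentiable one_ne_zero) t).hasDerivAt
  have hζD : ∀ t, HasDerivAt ζ (deriv ζ t) t := fun t =>
    ((hζ_smooth.differentiable one_ne_zero) t).hasDerivAt
  set W : ℝ → ℝ := fun t => V t - ψhi * Hp (ζ t) + ψlo * Hm (ζ t) - ι * ζ t with hW
  have hWD : ∀ t, HasDerivAt W
      (deriv V t - ψhi * (nussPos h (ζ t) * deriv ζ t)
        + ψlo * (nussNeg h (ζ t) * deriv ζ t) - ι * deriv ζ t) t := by
    intro t
    have h1 : HasDerivAt (fun t => Hp (ζ t)) (nussPos h (ζ t) * deriv ζ t) t :=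
      (hHpD (ζ t)).comp t (hζD t)
    have h2 : HasDerivAt (fun t => Hm (ζ t)) (nussNeg h (ζ t) * deriv ζ t) t :=
      (hHmD (ζ t)).comp t (hζD t)
    exact (((hVD t).sub (h1.const_mul ψhi)).add (h2.const_mul ψlo)).sub ((hζD t).const_mul ι)
  have hWanti : AntitoneOn W (Set.Ici 0) := by
    apply antitoneOn_of_deriv_nonpos (convex_Ici 0)
    · exact fun t _ => (hWD t).continuousAt.continuousWithinAt
    · intro x _; exact (hWD x).differentiableAt.differentiableWithinAt
    · intro x hx
      rw [interior_Ici] at hx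
      have hx0 : (0:ℝ) ≤ x := le_of_lt hx
      rw [(hWD x).deriv]
      have hψx := hψ x hx0
      have hζ' := hζ_mono x hx0
      have key : ψ x * h (ζ x) ≤ ψhi * nussPos h (ζ x) - ψlo * nussNeg h (ζ x) := by
        rcases le_total 0 (h (ζ x)) with hs | hs
        · have e1 : nussPos h (ζ x) = h (ζ x) := max_eq_right hs
          have e2 : nussNeg h (ζ x) = 0 := max_eq_left (by linarith)
          rw [e1, e2]
          nlinarith [hψx.2]
        · have e1 : nussPos h (ζ x) = 0 := max_eq_left hs
          have e2 : nussNeg h (ζ x) = -h (ζ x) := max_eq_right (by linarith)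
          rw [e1, e2]
          nlinarith [hψx.1]
      have hi := hineq x hx0
      nlinarith [mul_le_mul_of_nonneg_right key hζ']
  have hWle : ∀ t, 0 ≤ t → W t ≤ W 0 := fun t ht =>
    hWanti Set.self_mem_Ici (Set.mem_Ici.2 ht) ht
  have hbound : ∀ t, 0 ≤ t → V t ≤ W 0 + ψhi * Hp (ζ t) - ψlo * Hm (ζ t) + ι * ζ t := by
    intro t ht
    have h1 := hWle t ht
    simp only [hW] at h1 ⊢
    linarith
  have hζbdd : ∃ C : ℝ, ∀ t, 0 ≤ t → ζ t ≤ C := by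
    by_contra hc
    push_neg at hc
    have hsurj : ∀ z, ζ 0 ≤ z → ∃ t, 0 ≤ t ∧ ζ t = z := by
      intro z hz
      obtain ⟨t, ht0, htz⟩ := hc z
      have hconts : ContinuousOn ζ (Set.Icc 0 t) := hζ_smooth.continuous.continuousOn
      have hmem : z ∈ Set.Icc (ζ 0) (ζ t) := ⟨hz, le_of_lt htz⟩
      obtain ⟨c, hc1, hc2⟩ := intermediate_value_Icc ht0 hconts hmem
      exact ⟨c, hc1.1, hc2⟩
    have hPz : ∀ᶠ z in atTop, 0 ≤ W 0 + ψhi * Hp z - ψlo * Hm z + ι * z := by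
      filter_upwards [eventually_ge_atTop (ζ 0)] with z hz
      obtain ⟨t, ht0, htz⟩ := hsurj z hz
      have := hbound t ht0
      have hv := hV_nonneg t ht0
      rw [htz] at this
      linarith
    rcases hcase with hpos | hneg
    · refine keyContr Hm Hp ψlo ψhi ι (W 0) hpos hTp hlsM ?_
      filter_upwards [hPz] with z hz
      linarith
    · refine keyContr Hp Hm (-ψhi) (-ψlo) ι (W 0) (by linarith) hTm hlsP ?_
      filter_upwards [hPz] with z hz
      linarith
  obtain ⟨C, hC⟩ := hζbdd
  have hC0 : (0:ℝ) ≤ C := le_trans (hζ_nonneg 0 le_rfl) (hC 0 le_rfl)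
  have hHpc : Continuous Hp :=
    (Differentiable.continuous fun x => (hHpD x).differentiableAt)
  have hHmc : Continuous Hm :=
    (Differentiable.continuous fun x => (hHmD x).differentiableAt)
  set G : ℝ → ℝ := fun z => W 0 + ψhi * Hp z - ψlo * Hm z + ι * z with hG
  have hGc : Continuous G :=
    ((continuous_const.add (continuous_const.mul hHpc)).sub
      (continuous_const.mul hHmc)).add (continuous_const.mul continuous_id)
  obtain ⟨x0, _, hx0max⟩ := isCompact_Icc.exists_isMaxOn
    (Set.nonempty_Icc.2 hC0) hGc.continuousOn
  refine ⟨⟨G x0, fun t ht => ?_⟩, ⟨C, hC⟩⟩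
  have hmem : ζ t ∈ Set.Icc (0:ℝ) C := ⟨hζ_nonneg t ht, hC t ht⟩
  exact le_trans (hbound t ht) (hx0max hmem)
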